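/- Let G be a graph, F a k-matching in G of maximum size, and let x, y be two distinct vertices with d_F(x) < k and d_F(y) < k. Suppose P = (y = v_0, v_1, …, v_ℓ) is an F-alternating walk of type ↑↑ (first edge not in F, and upon arriving at v_ℓ the last edge is not in the current symmetric difference). Then the symmetric difference H = F △ P satisfies d_H(v_ℓ) = d_F(v_ℓ) + 1 = k + 1; in particular, every vertex reachable from y by an F-alternating walk of type ↑↑ has d_F-degree exactly k. -/
import Mathlib


open Finset
open scoped Classical

/-- Degree of a vertex in an edge set. -/
noncomputable def edgeDeg {V : Type*} (F : Finset (Sym2 V)) (v : V) : ℕ :=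
  (F.filter (fun e => v ∈ e)).card

/-- A `k`-matching. -/
def IsKMatching {V : Type*} [Fintype V] (G : SimpleGraph V) (k : ℕ) (F : Finset (Sym2 V)) : Prop :=
  F ⊆ G.edgeFinset ∧ ∀ v : V, edgeDeg F v ≤ k

/-- Maximum size of a `k`-matching in `G`. -/
noncomputable def maxKMatch {V : Type*} [Fintype V] (G : SimpleGraph V) (k : ℕ) : ℕ :=
  (G.edgeFinset.powerset.filter (fun F => IsKMatching G k F)).sup Finset.card

/-- The `k`-matching deficiency `λ_k(G)`. -/
noncomputable def lamK {V : Type*} [Fintype V] (G : SimpleGraph V) (k : ℕ) : ℕ :=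
  k * Fintype.card V / 2 - maxKMatch G k

/-- `e` lies in the symmetric difference of `F` with the edge list `l`
(edges counted with multiplicity). -/
def inSD {V : Type*} [DecidableEq V] (F : Finset (Sym2 V)) (l : List (Sym2 V))
    (e : Sym2 V) : Prop :=
  Odd ((if e ∈ F then 1 else 0) + l.count e)

/-- The symmetric difference `F △ P` of an edge set with the multiset of edges of a walk:
the edges appearing an odd number of times in total. -/
noncomputable def sdWalk {V : Type*} [DecidableEq V] (G : SimpleGraph V)
    (F : Finset (Sym2 V)) {u v : V} (w : G.Walk u v) : Finset (Sym2 V) :=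
  (F ∪ w.edges.toFinset).filter (fun e => inSD F w.edges e)

/-- `w` is an `F`-alternating walk: membership of consecutive edges in the running
symmetric difference alternates. -/
def IsAltWalk {V : Type*} [DecidableEq V] (G : SimpleGraph V)
    (F : Finset (Sym2 V)) {u v : V} (w : G.Walk u v) : Prop :=
  ∀ j : ℕ, j + 1 < w.edges.length →
    (inSD F (w.edges.take j) (w.edges.getD j (Sym2.diag u)) ↔
      ¬ inSD F (w.edges.take (j + 1)) (w.edges.getD (j + 1) (Sym2.diag u)))

/-- Type ↑↑: the first edge is not in `F` and the last edge is not in the running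
symmetric difference. -/
def TypeUU {V : Type*} [DecidableEq V] (G : SimpleGraph V)
    (F : Finset (Sym2 V)) {u v : V} (w : G.Walk u v) : Prop :=
  0 < w.edges.length ∧ w.edges.getD 0 (Sym2.diag u) ∉ F ∧
    ¬ inSD F (w.edges.take (w.edges.length - 1))
      (w.edges.getD (w.edges.length - 1) (Sym2.diag u))

/-- Type ↑↓: either the empty walk, or the first edge is not in `F` and the last edge is
in the running symmetric difference. -/
def TypeUD {V : Type*} [DecidableEq V] (G : SimpleGraph V)
    (F : Finset (Sym2 V)) {u v : V} (w : G.Walk u v) : Prop :=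
  w.edges.length = 0 ∨ (w.edges.getD 0 (Sym2.diag u) ∉ F ∧
    inSD F (w.edges.take (w.edges.length - 1))
      (w.edges.getD (w.edges.length - 1) (Sym2.diag u)))

section helpers
variable {V : Type*} [DecidableEq V]

noncomputable def tog (F : Finset (Sym2 V)) (a : Sym2 V) : Finset (Sym2 V) :=
  if a ∈ F then F.erase a else insert a F

lemma inSD_nil (F : Finset (Sym2 V)) (e : Sym2 V) : inSD F [] e ↔ e ∈ F := by
  unfold inSD
  by_cases h : e ∈ F <;> simp [h]

lemma inSD_cons (F : Finset (Sym2 V)) (a : Sym2 V) (l : List (Sym2 V)) (e : Sym2 V) :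
    inSD F (a :: l) e ↔ inSD (tog F a) l e := by
  unfold inSD tog
  rw [List.count_cons]
  by_cases hae : e = a
  · subst hae
    by_cases h : e ∈ F <;> simp [h, Nat.odd_iff] <;> omega
  · have h1 : (e ∈ (if a ∈ F then F.erase a else insert a F)) ↔ e ∈ F := by
      split
      · simp [Finset.mem_erase, hae]
      · simp [Finset.mem_insert, hae]
    have h2 : ¬ ((a == e) = true) := by simp [Ne.symm hae]
    rw [if_neg h2]
    simp only [h1, Nat.add_zero]

lemma mem_sdWalk {G : SimpleGraph V} {u v : V} (F : Finset (Sym2 V)) (w : G.Walk u v)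
    (e : Sym2 V) : e ∈ sdWalk G F w ↔ inSD F w.edges e := by
  simp only [sdWalk, Finset.mem_filter, Finset.mem_union, List.mem_toFinset]
  constructor
  · exact fun h => h.2
  · intro h
    refine ⟨?_, h⟩
    by_contra hc
    push_neg at hc
    unfold inSD at h
    rw [if_neg hc.1, List.count_eq_zero_of_not_mem hc.2] at h
    simp at h

lemma sdWalk_nil {G : SimpleGraph V} (F : Finset (Sym2 V)) (u : V) :
    sdWalk G F (SimpleGraph.Walk.nil' u) = F := by
  ext e
  rw [mem_sdWalk]
  simp [inSD_nil]

lemma sdWalk_cons {G : SimpleGraph V} {u b z : V} (F : Finset (Sym2 V)) (h : G.Adj u b)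
    (p : G.Walk b z) :
    sdWalk G F (SimpleGraph.Walk.cons h p) = sdWalk G (tog F s(u, b)) p := by
  ext e
  rw [mem_sdWalk, mem_sdWalk, SimpleGraph.Walk.edges_cons, inSD_cons]

lemma edgeDeg_insert (F : Finset (Sym2 V)) (e : Sym2 V) (he : e ∉ F) (v : V) :
    edgeDeg (insert e F) v = edgeDeg F v + (if v ∈ e then 1 else 0) := by
  unfold edgeDeg
  rw [Finset.filter_insert]
  split
  · rw [Finset.card_insert_of_notMem (by simp [he])]
  · omega

lemma edgeDeg_erase (F : Finset (Sym2 V)) (e : Sym2 V) (he : e ∈ F) (v : V) :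
    edgeDeg F v = edgeDeg (F.erase e) v + (if v ∈ e then 1 else 0) := by
  unfold edgeDeg
  rw [Finset.filter_erase]
  by_cases hv : v ∈ e
  · rw [if_pos hv, Finset.card_erase_add_one (by simp [he, hv])]
  · rw [if_neg hv, Finset.erase_eq_of_notMem (by simp [hv])]
    omega

lemma if_mem_sym2 {u b v : V} (h : u ≠ b) :
    (if v ∈ s(u, b) then 1 else 0) = (if v = u then 1 else 0) + (if v = b then 1 else 0) := by
  by_cases h1 : v = u <;> by_cases h2 : v = b <;> simp_all [Sym2.mem_iff]

lemma getD_congr {l : List (Sym2 V)} {j : ℕ} (h : j < l.length) (d d' : Sym2 V) :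
    l.getD j d = l.getD j d' := by
  rw [List.getD_eq_getElem l d h, List.getD_eq_getElem l d' h]

end helpers

section main
variable {V : Type*} [DecidableEq V]

lemma alt_cons {G : SimpleGraph V} {F : Finset (Sym2 V)} {u b z : V} (h : G.Adj u b)
    (p : G.Walk b z) (halt : IsAltWalk G F (SimpleGraph.Walk.cons h p)) :
    IsAltWalk G (tog F s(u, b)) p := by
  intro j hj
  have H := halt (j + 1) (by simp only [SimpleGraph.Walk.edges_cons, List.length_cons]; omega)
  simp only [SimpleGraph.Walk.edges_cons, List.take_succ_cons, List.getD_cons_succ] at H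
  rw [inSD_cons, inSD_cons] at H
  rw [getD_congr (by omega : j < p.edges.length) (Sym2.diag u) (Sym2.diag b),
      getD_congr (by omega : j + 1 < p.edges.length) (Sym2.diag u) (Sym2.diag b)] at H
  exact H

lemma key {G : SimpleGraph V} {u z : V} (w : G.Walk u z) :
    ∀ F : Finset (Sym2 V), IsAltWalk G F w →
    ((0 < w.edges.length ∧ w.edges.getD 0 (Sym2.diag u) ∉ F ∧
        ¬ inSD F (w.edges.take (w.edges.length - 1))
          (w.edges.getD (w.edges.length - 1) (Sym2.diag u))) →
      (∀ v, edgeDeg (sdWalk G F w) v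
          = edgeDeg F v + (if v = u then 1 else 0) + (if v = z then 1 else 0)) ∧
        (sdWalk G F w).card = F.card + 1) ∧
    ((w.edges.length = 0 ∨ (w.edges.getD 0 (Sym2.diag u) ∈ F ∧
        ¬ inSD F (w.edges.take (w.edges.length - 1))
          (w.edges.getD (w.edges.length - 1) (Sym2.diag u)))) →
      (∀ v, edgeDeg (sdWalk G F w) v + (if v = u then 1 else 0)
          = edgeDeg F v + (if v = z then 1 else 0)) ∧
        (sdWalk G F w).card = F.card) := by
  induction w with
  | nil =>
    intro F halt
    constructor
    · rintro ⟨h0, -⟩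
      simp at h0
    · intro _
      rw [show (SimpleGraph.Walk.nil : G.Walk _ _) = SimpleGraph.Walk.nil' _ from rfl,
        sdWalk_nil]
      exact ⟨fun v => rfl, rfl⟩
  | @cons u b z h p ih =>
    intro F halt
    have hub : u ≠ b := h.ne
    have hedges : (SimpleGraph.Walk.cons h p).edges = s(u, b) :: p.edges :=
      SimpleGraph.Walk.edges_cons h p
    have altp := alt_cons h p halt
    constructor
    · -- type ↑↑ : first edge not in F
      rintro ⟨-, hnotF, hlast⟩
      rw [hedges] at hnotF hlast
      simp only [List.getD_cons_zero] at hnotF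
      have htog : tog F s(u, b) = insert s(u, b) F := if_neg hnotF
      -- establish the UD-style hypothesis for p with F' = insert e F
      have hF' := (ih (tog F s(u, b)) altp).2
      have hyp : p.edges.length = 0 ∨ (p.edges.getD 0 (Sym2.diag b) ∈ tog F s(u, b) ∧
          ¬ inSD (tog F s(u, b)) (p.edges.take (p.edges.length - 1))
            (p.edges.getD (p.edges.length - 1) (Sym2.diag b))) := by
        rcases Nat.eq_zero_or_pos p.edges.length with h0 | hpos
        · exact Or.inl h0
        · refine Or.inr ⟨?_, ?_⟩
          · have H := halt 0 (by rw [hedges]; simp only [List.length_cons]; omega)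
            rw [hedges] at H
            simp only [List.getD_cons_zero, List.getD_cons_succ, List.take_succ_cons,
              List.take_zero] at H
            rw [inSD_nil] at H
            have H2 : inSD F [s(u, b)] (p.edges.getD 0 (Sym2.diag u)) := by
              by_contra hc
              exact hnotF (H.mpr hc)
            rw [inSD_cons, inSD_nil] at H2
            rwa [getD_congr hpos (Sym2.diag u) (Sym2.diag b)] at H2
          · -- transfer last condition
            have hlen : (s(u, b) :: p.edges).length - 1 = (p.edges.length - 1) + 1 := by
              simp only [List.length_cons]; omega
            rw [hlen] at hlast
            simp only [List.take_succ_cons, List.getD_cons_succ] at hlast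
            rw [inSD_cons] at hlast
            rwa [getD_congr (by omega : p.edges.length - 1 < p.edges.length)
              (Sym2.diag u) (Sym2.diag b)] at hlast
      obtain ⟨hdeg, hcard⟩ := hF' hyp
      rw [sdWalk_cons]
      constructor
      · intro v
        have h1 := hdeg v
        have h2 : edgeDeg (tog F s(u, b)) v
            = edgeDeg F v + (if v = u then 1 else 0) + (if v = b then 1 else 0) := by
          rw [htog, edgeDeg_insert F _ hnotF v, if_mem_sym2 hub]
          omega
        rw [h2] at h1
        omega
      · rw [hcard, htog, Finset.card_insert_of_notMem hnotF]
    · -- type starting with "remove" (or empty)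
      intro hyp
      rcases hyp with h0 | ⟨hinF, hlast⟩
      · rw [hedges] at h0; simp at h0
      rw [hedges] at hinF hlast
      simp only [List.getD_cons_zero] at hinF
      have htog : tog F s(u, b) = F.erase s(u, b) := if_pos hinF
      -- p must be nonempty
      have hpos : 0 < p.edges.length := by
        rcases Nat.eq_zero_or_pos p.edges.length with h0 | hh
        · exfalso
          have h1 : (s(u, b) :: p.edges).length - 1 = 0 := by
            simp only [List.length_cons]; omega
          rw [h1] at hlast
          simp only [List.take_zero, List.getD_cons_zero] at hlast
          rw [inSD_nil] at hlast
          exact hlast hinF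
        · exact hh
      have hF' := (ih (tog F s(u, b)) altp).1
      have hyp' : 0 < p.edges.length ∧ p.edges.getD 0 (Sym2.diag b) ∉ tog F s(u, b) ∧
          ¬ inSD (tog F s(u, b)) (p.edges.take (p.edges.length - 1))
            (p.edges.getD (p.edges.length - 1) (Sym2.diag b)) := by
        refine ⟨hpos, ?_, ?_⟩
        · have H := halt 0 (by rw [hedges]; simp only [List.length_cons]; omega)
          rw [hedges] at H
          simp only [List.getD_cons_zero, List.getD_cons_succ, List.take_succ_cons,
            List.take_zero] at H
          rw [inSD_nil] at H
          have H2 := H.mp hinF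
          rw [inSD_cons, inSD_nil] at H2
          rwa [getD_congr hpos (Sym2.diag u) (Sym2.diag b)] at H2
        · have hlen : (s(u, b) :: p.edges).length - 1 = (p.edges.length - 1) + 1 := by
            simp only [List.length_cons]; omega
          rw [hlen] at hlast
          simp only [List.take_succ_cons, List.getD_cons_succ] at hlast
          rw [inSD_cons] at hlast
          rwa [getD_congr (by omega : p.edges.length - 1 < p.edges.length)
            (Sym2.diag u) (Sym2.diag b)] at hlast
      obtain ⟨hdeg, hcard⟩ := hF' hyp'
      rw [sdWalk_cons]
      constructor
      · intro v
        have h1 := hdeg v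
        have h2 : edgeDeg F v
            = edgeDeg (tog F s(u, b)) v + (if v = u then 1 else 0) + (if v = b then 1 else 0) := by
          rw [htog, edgeDeg_erase F _ hinF v, if_mem_sym2 hub]
          omega
        omega
      · rw [hcard, htog]
        have := Finset.card_erase_add_one hinF
        omega

end main


theorem stmt9 {V : Type*} [Fintype V] [DecidableEq V] (G : SimpleGraph V) (k : ℕ)
    (F : Finset (Sym2 V)) (hF : IsKMatching G k F) (hFmax : F.card = maxKMatch G k)
    (x y : V) (hxy : x ≠ y) (hx : edgeDeg F x < k) (hy : edgeDeg F y < k)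
    (z : V) (hz : z ≠ y) (w : G.Walk y z)
    (halt : IsAltWalk G F w) (htype : TypeUU G F w) :
    edgeDeg (sdWalk G F w) z = edgeDeg F z + 1 ∧ edgeDeg F z = k := by
  have hkey := (key w F halt).1 htype
  obtain ⟨hdeg, hcard⟩ := hkey
  have hdz := hdeg z
  rw [if_neg hz, if_pos rfl] at hdz
  have hzz : edgeDeg (sdWalk G F w) z = edgeDeg F z + 1 := by omega
  refine ⟨hzz, ?_⟩
  by_contra hzk
  have hzlt : edgeDeg F z < k := lt_of_le_of_ne (hF.2 z) hzk
  -- H is a k-matching of larger cardinality, contradiction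
  have hsub : sdWalk G F w ⊆ G.edgeFinset := by
    intro e he
    have := Finset.filter_subset (fun e => inSD F w.edges e) (F ∪ w.edges.toFinset) he
    rcases Finset.mem_union.mp this with h1 | h1
    · exact hF.1 h1
    · rw [SimpleGraph.mem_edgeFinset]
      exact w.edges_subset_edgeSet (List.mem_toFinset.mp h1)
  have hkm : IsKMatching G k (sdWalk G F w) := by
    refine ⟨hsub, fun v => ?_⟩
    have h1 := hdeg v
    by_cases hvy : v = y
    · subst hvy
      rw [if_pos rfl, if_neg (Ne.symm hz)] at h1
      omega
    · by_cases hvz : v = z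
      · subst hvz
        rw [if_neg hvy, if_pos rfl] at h1
        omega
      · rw [if_neg hvy, if_neg hvz] at h1
        have := hF.2 v
        omega
  have hmem : sdWalk G F w ∈
      (G.edgeFinset.powerset.filter (fun F => IsKMatching G k F)) :=
    Finset.mem_filter.mpr ⟨Finset.mem_powerset.mpr hsub, hkm⟩
  have hle : (sdWalk G F w).card ≤ maxKMatch G k :=
    Finset.le_sup (f := Finset.card) hmem
  omega
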